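/- Seed mutation preserves the property of being a basis: if {e_1, …, e_n} is a ℤ-basis of a lattice N with skew-symmetric form {-,-}, and we define e'_k = -e_j if k = j and e'_k = e_k + max({e_k, e_j}, 0)·e_j otherwise, then {e'_1, …, e'_n} is again a ℤ-basis of N. -/

import Mathlib

/-- Seed mutation preserves being a ℤ-basis: mutating a basis `e₁, …, eₙ` of a
lattice `N` with integer skew-symmetric form `{-,-}` at index `j` by
`e'_j = -e_j` and `e'_k = e_k + max({e_k, e_j}, 0) • e_j` (k ≠ j) yields
again a ℤ-basis of `N`. -/
theorem stmt5 (n : ℕ) (N : Type*) [AddCommGroup N] [Module ℤ N]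
    (b : Module.Basis (Fin n) ℤ N) (B : N →ₗ[ℤ] N →ₗ[ℤ] ℤ)
    (hskew : ∀ x y, B y x = -B x y) (j : Fin n) :
    ∃ b' : Module.Basis (Fin n) ℤ N, ∀ k,
      b' k = if k = j then -(b j) else b k + (max (B (b k) (b j)) 0) • b j := by
  set v : Fin n → N := fun k =>
    if k = j then -(b j) else b k + (max (B (b k) (b j)) 0) • b j with hv
  set f : N →ₗ[ℤ] N := b.constr ℕ v with hf
  have hfb : ∀ k, f (b k) = v k := fun k => b.constr_basis ℕ v k
  have hfj : f (b j) = -(b j) := by simp [hfb, hv]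
  have hinv : f ∘ₗ f = LinearMap.id := by
    apply b.ext
    intro k
    by_cases hk : k = j
    · subst hk
      simp [hfj]
    · have hvk : v k = b k + (max (B (b k) (b j)) 0) • b j := by
        simp only [hv]; rw [if_neg hk]
      rw [LinearMap.comp_apply, LinearMap.id_apply, hfb, hvk, map_add, map_zsmul f, hfb, hvk, hfj]
      simp
  refine ⟨b.map (LinearEquiv.ofLinear f f hinv hinv), fun k => ?_⟩
  simp [Module.Basis.map_apply, LinearEquiv.ofLinear_apply, hfb, hv]
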